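/- Let G1, G2 be groups and φ : G1 → G2 a bijection such that a multiset over G1 is a product-one sequence over G1 if and only if its termwise image under φ is a product-one sequence over G2. Then for all g1, g2 in G1, either φ(g1 g2) = φ(g1) φ(g2) or φ(g1 g2) = φ(g2) φ(g1). -/

import Mathlib

/-- A multiset `S` over a group `G` is a *product-one sequence* if its terms can be
ordered so that their product is `1`. -/
def IsProductOne {G : Type*} [Group G] (S : Multiset G) : Prop :=
  ∃ l : List G, (l : Multiset G) = S ∧ l.prod = 1

/-- The monoid `B(G)` of product-one sequences over `G`, as a submonoid of the free
abelian monoid (finite multisets under addition) over `G`. -/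
def ProductOneSubmonoid (G : Type*) [Group G] : AddSubmonoid (Multiset G) where
  carrier := {S | IsProductOne S}
  zero_mem' := ⟨[], rfl, rfl⟩
  add_mem' := by
    rintro a b ⟨l1, rfl, p1⟩ ⟨l2, rfl, p2⟩
    exact ⟨l1 ++ l2, by simp, by simp [p1, p2]⟩

lemma rot {G : Type*} [Group G] (l1 l2 : List G) (h : (l1 ++ l2).prod = 1) :
    (l2 ++ l1).prod = 1 := by
  rw [List.prod_append] at h ⊢
  rw [show l1.prod = l2.prod⁻¹ from eq_inv_of_mul_eq_one_left h]
  simp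

lemma key {G : Type*} [Group G] (a : G) (l : List G)
    (hp : IsProductOne (a ::ₘ (l : Multiset G))) :
    ∃ l' : List G, l'.Perm l ∧ a * l'.prod = 1 := by
  obtain ⟨m, hm, hprod⟩ := hp
  have ha : a ∈ m := by
    rw [← Multiset.mem_coe, hm]; exact Multiset.mem_cons_self a _
  obtain ⟨s, t, rfl⟩ := List.append_of_mem ha
  refine ⟨t ++ s, ?_, ?_⟩
  · have hp1 : (s ++ a :: t).Perm (a :: l) := Multiset.coe_eq_coe.1 (by simpa using hm)
    have hp2 : (a :: (s ++ t)).Perm (a :: l) := List.perm_middle.symm.trans hp1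
    exact List.perm_append_comm.trans hp2.cons_inv
  · have := rot s (a :: t) hprod
    simpa [mul_assoc] using this

lemma pair_perm {G : Type*} (x y a b : G) (hp : ([x, y] : List G).Perm [a, b]) :
    (x = a ∧ y = b) ∨ (x = b ∧ y = a) := by
  have hx : x = a ∨ x = b := by
    have := hp.subset (List.mem_cons_self : x ∈ [x, y]); simpa using this
  rcases hx with rfl | rfl
  · left
    exact ⟨rfl, by have := List.perm_singleton.1 hp.cons_inv; simpa using this⟩
  · right
    have hp2 : ([x, y] : List G).Perm [x, a] := hp.trans (List.Perm.swap x a [])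
    exact ⟨rfl, by have := List.perm_singleton.1 hp2.cons_inv; simpa using this⟩

theorem A3 (G1 G2 : Type*) [Group G1] [Group G2]
    (φ : G1 → G2) (hbij : Function.Bijective φ)
    (h : ∀ S : Multiset G1, IsProductOne S ↔ IsProductOne (S.map φ)) :
    ∀ g1 g2 : G1, φ (g1 * g2) = φ g1 * φ g2 ∨ φ (g1 * g2) = φ g2 * φ g1 := by
  have hinv : ∀ g : G1, φ g⁻¹ = (φ g)⁻¹ := by
    intro g
    have hS : IsProductOne ((g ::ₘ ([g⁻¹] : List G1)) : Multiset G1) :=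
      ⟨[g, g⁻¹], by rfl, by simp⟩
    have hm := (h _).1 hS
    rw [Multiset.map_cons] at hm
    have hm2 : IsProductOne (φ g ::ₘ (([φ g⁻¹] : List G2) : Multiset G2)) := by
      simpa using hm
    obtain ⟨l', hperm, hpe⟩ := key (φ g) [φ g⁻¹] hm2
    rw [List.perm_singleton.1 hperm] at hpe
    simp at hpe
    exact eq_inv_of_mul_eq_one_right hpe
  intro g1 g2
  have hS : IsProductOne (((g1 * g2)⁻¹) ::ₘ (([g1, g2] : List G1) : Multiset G1)) :=
    ⟨[(g1 * g2)⁻¹, g1, g2], by rfl, by simp [← mul_assoc]⟩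
  have hm := (h _).1 hS
  rw [Multiset.map_cons] at hm
  have hm2 : IsProductOne (φ (g1 * g2)⁻¹ ::ₘ (([φ g1, φ g2] : List G2) : Multiset G2)) := by
    simpa using hm
  obtain ⟨l', hperm, hpe⟩ := key _ _ hm2
  rw [hinv] at hpe
  have hlen := hperm.length_eq
  rcases l' with _ | ⟨x, _ | ⟨y, _ | z⟩⟩ <;> simp at hlen
  have hprod : φ (g1 * g2) = x * y := by
    have := hpe
    simp only [List.prod_cons, List.prod_nil, mul_one] at this
    rw [inv_mul_eq_one] at this  -- maybe wrong lemma
    exact this.symm ▸ rfl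
  rcases pair_perm x y _ _ hperm with ⟨rfl, rfl⟩ | ⟨rfl, rfl⟩
  · left; rw [hprod]
  · right; rw [hprod]
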